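/- For i.i.d. U[0,1] observations, the expected number Ṽ_n of selections made by the optimal online monotone (decreasing) subsequence selection policy satisfies E[Ṽ_n] ≤ √(2n) for all n ≥ 1. -/

import Mathlib

open MeasureTheory ProbabilityTheory Finset Set
open scoped Classical ENNReal

lemma my_lintegral_sq {α : Type*} [MeasurableSpace α] (μ : Measure α) [IsProbabilityMeasure μ]
    (f : α → ℝ≥0∞) (hf : AEMeasurable f μ) :
    (∫⁻ x, f x ∂μ) ^ 2 ≤ ∫⁻ x, (f x) ^ 2 ∂μ := by
  have h := ENNReal.lintegral_mul_le_Lp_mul_Lq μ (p := 2) (q := 2)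
    ⟨by norm_num, by norm_num, by norm_num⟩ hf (aemeasurable_const (b := (1:ℝ≥0∞)))
  simp only [mul_one, ENNReal.one_rpow, lintegral_const, measure_univ, one_mul,
    ENNReal.one_rpow, ENNReal.rpow_natCast] at h
  have h2 : (∫⁻ x, f x ∂μ) ≤ (∫⁻ x, (f x) ^ (2:ℝ) ∂μ) ^ (1/2 : ℝ) := by
    simpa using h
  calc (∫⁻ x, f x ∂μ) ^ 2 ≤ (((∫⁻ x, (f x) ^ (2:ℝ) ∂μ) ^ (1/2 : ℝ)) : ℝ≥0∞) ^ 2 :=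
        pow_le_pow_left' h2 2
    _ = ∫⁻ x, (f x) ^ 2 ∂μ := by
        rw [← ENNReal.rpow_natCast (((∫⁻ x, (f x) ^ (2:ℝ) ∂μ) ^ (1/2 : ℝ))) 2,
          ← ENNReal.rpow_mul]
        norm_num

lemma my_bathtub (s : ℝ) (hs : s ≤ 1) (B : Set ℝ) (hB : MeasurableSet B)
    (hBs : ∀ᵐ u ∂(volume.restrict (Icc (0:ℝ) 1)), u ∈ B → u ≤ s) :
    (volume.restrict (Icc (0:ℝ) 1) B) ^ 2 / 2
      ≤ ∫⁻ u in B, ENNReal.ofReal (s - u) ∂(volume.restrict (Icc (0:ℝ) 1)) := by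
  set ν := volume.restrict (Icc (0:ℝ) 1) with hν
  have hprob : IsProbabilityMeasure ν := by
    constructor
    rw [hν, Measure.restrict_apply_univ, Real.volume_Icc]
    norm_num
  set β := (ν B).toReal with hβ
  have hνB_ne_top : ν B ≠ ⊤ := (measure_lt_top ν B).ne
  have hνB : ν B = ENNReal.ofReal β := (ENNReal.ofReal_toReal hνB_ne_top).symm
  have hβ0 : 0 ≤ β := ENNReal.toReal_nonneg
  -- the indicator function
  set f : ℝ → ℝ := B.indicator (fun u => s - u) with hf
  have hf_nn : 0 ≤ᵐ[ν] f := by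
    filter_upwards [hBs] with u hu
    rw [hf]
    by_cases h : u ∈ B
    · simp [Set.indicator_of_mem h, sub_nonneg.2 (hu h)]
    · simp [Set.indicator_of_notMem h]
  have hf_mble : AEMeasurable f ν := by
    apply Measurable.aemeasurable
    exact (measurable_const.sub measurable_id).indicator hB
  have key : ∫⁻ u in B, ENNReal.ofReal (s - u) ∂ν = ∫⁻ u, ENNReal.ofReal (f u) ∂ν := by
    rw [← lintegral_indicator hB]
    apply lintegral_congr
    intro u
    by_cases h : u ∈ B <;>
      simp [hf, Set.indicator_of_mem, Set.indicator_of_notMem, h]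
  rw [key, lintegral_eq_lintegral_meas_lt ν hf_nn hf_mble]
  -- lower bound the layered integral
  have hlayer : ∀ t : ℝ, 0 < t → ENNReal.ofReal (β - t) ≤ ν {a | t < f a} := by
    intro t ht
    have hset : {a | t < f a} = B ∩ {u | u < s - t} := by
      ext u
      simp only [Set.mem_setOf_eq, Set.mem_inter_iff, hf]
      by_cases h : u ∈ B
      · simp [Set.indicator_of_mem h, h]; constructor <;> intro h' <;> linarith
      · simp [Set.indicator_of_notMem h, h]; linarith
    rw [hset]
    -- ν (B \ {u < s - t}) ≤ ofReal t
    have hdiff : ν (B \ {u | u < s - t}) ≤ ENNReal.ofReal t := by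
      have hsub : B \ {u | u < s - t} ⊆ {u | s - t ≤ u} := by
        intro u hu
        have := hu.2
        simp only [Set.mem_setOf_eq, not_lt] at this ⊢
        exact this
      calc ν (B \ {u | u < s - t}) ≤ ν ({u | s - t ≤ u} ∩ {u | u ≤ s}) := by
            apply measure_mono_ae
            filter_upwards [hBs] with u hu
            intro h
            exact ⟨hsub h, hu h.1⟩
        _ ≤ volume ({u : ℝ | s - t ≤ u} ∩ {u | u ≤ s}) := by
            rw [hν]; exact Measure.restrict_le_self _
        _ ≤ ENNReal.ofReal t := by
            have : {u : ℝ | s - t ≤ u} ∩ {u | u ≤ s} = Icc (s - t) s := rfl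
            rw [this, Real.volume_Icc]
            simp
    have hsplit : ν B ≤ ν (B ∩ {u | u < s - t}) + ν (B \ {u | u < s - t}) :=
      le_of_eq (measure_inter_add_diff B (measurableSet_lt measurable_id measurable_const)).symm
    have : ν B - ENNReal.ofReal t ≤ ν (B ∩ {u | u < s - t}) := by
      rw [tsub_le_iff_right]
      exact hsplit.trans (add_le_add le_rfl hdiff)
    refine le_trans ?_ this
    rw [hνB, ← ENNReal.ofReal_sub _ ht.le]
  -- integrate the lower bound over (0, β)
  calc ν B ^ 2 / 2 = ENNReal.ofReal (β ^ 2 / 2) := by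
        rw [hνB, ENNReal.ofReal_div_of_pos (by norm_num), ← ENNReal.ofReal_pow hβ0]
        norm_num
    _ = ∫⁻ t in Ioo (0:ℝ) β, ENNReal.ofReal (β - t) := by
        rw [← ofReal_integral_eq_lintegral_ofReal]
        · congr 1
          rw [← integral_Ioc_eq_integral_Ioo, ← intervalIntegral.integral_of_le hβ0]
          rw [intervalIntegral.integral_sub intervalIntegrable_const intervalIntegral.intervalIntegrable_id]
          rw [intervalIntegral.integral_const, integral_id]
          simp
          ring
        · exact ((continuous_const.sub continuous_id).continuousOn.integrableOn_Icc).mono_set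
            Set.Ioo_subset_Icc_self
        · filter_upwards [ae_restrict_mem measurableSet_Ioo] with t ht
          simp only [Pi.zero_apply]
          linarith [ht.2]
    _ ≤ ∫⁻ t in Ioo (0:ℝ) β, ν {a | t < f a} := by
        apply lintegral_mono_ae
        filter_upwards [ae_restrict_mem measurableSet_Ioo] with t ht
        exact hlayer t ht.1
    _ ≤ ∫⁻ t in Ioi (0:ℝ), ν {a | t < f a} := by
        apply lintegral_mono' (Measure.restrict_mono Set.Ioo_subset_Ioi_self le_rfl) le_rfl

lemma my_step3 {Ω : Type*} [MeasureSpace Ω] [IsProbabilityMeasure (ℙ : Measure Ω)]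
    {E : Type*} [MeasurableSpace E]
    (W : Ω → E) (U : Ω → ℝ) (hW : Measurable W) (hU : Measurable U)
    (hind : IndepFun W U ℙ)
    (hlawU : Measure.map U ℙ = volume.restrict (Icc (0:ℝ) 1))
    (g : E → ℝ) (hg : Measurable g)
    (C : Set (E × ℝ)) (hC : MeasurableSet C)
    (hAle : ∀ᵐ ω ∂ℙ, (W ω, U ω) ∈ C → U ω ≤ g (W ω))
    (hg1 : ∀ᵐ ω ∂ℙ, g (W ω) ≤ 1) :
    ((ℙ {ω | (W ω, U ω) ∈ C}).toReal) ^ 2 / 2 ≤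
      ∫ ω, (g (W ω) - U ω) * (if (W ω, U ω) ∈ C then 1 else 0) ∂ℙ := by
  set ν : Measure ℝ := volume.restrict (Icc (0:ℝ) 1) with hνdef
  set μ : Measure E := Measure.map W ℙ with hμdef
  have hνprob : IsProbabilityMeasure ν := by
    constructor
    rw [hνdef, Measure.restrict_apply_univ, Real.volume_Icc]; norm_num
  have hμprob : IsProbabilityMeasure μ := Measure.isProbabilityMeasure_map hW.aemeasurable
  set T : Ω → E × ℝ := fun ω => (W ω, U ω) with hTdef
  have hT : Measurable T := hW.prodMk hU
  have hmapT : Measure.map T ℙ = μ.prod ν := by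
    rw [hμdef, ← hlawU]
    exact (indepFun_iff_map_prod_eq_prod_map_map hW.aemeasurable hU.aemeasurable).mp hind
  -- real integrand
  set h : Ω → ℝ := fun ω => (g (W ω) - U ω) * (if (W ω, U ω) ∈ C then 1 else 0) with hhdef
  have hU01 : ∀ᵐ ω ∂ℙ, U ω ∈ Icc (0:ℝ) 1 := by
    have : ℙ (U ⁻¹' (Icc (0:ℝ) 1)ᶜ) = 0 := by
      rw [← Measure.map_apply hU (measurableSet_Icc.compl), hlawU,
        Measure.restrict_apply measurableSet_Icc.compl]
      simp
    filter_upwards [measure_eq_zero_iff_ae_notMem.mp this] with ω hω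
    simpa using hω
  have hmeas_h : Measurable h := by
    apply Measurable.mul
    · exact (hg.comp hW).sub hU
    · exact Measurable.ite (hT hC) measurable_const measurable_const
  have h_nn : 0 ≤ᵐ[ℙ] h := by
    filter_upwards [hAle] with ω hω
    simp only [Pi.zero_apply, hhdef]
    by_cases hc : (W ω, U ω) ∈ C
    · simp only [hc, if_pos, mul_one]
      have := hω hc
      linarith
    · simp [hc]
  have h_le : ∀ᵐ ω ∂ℙ, h ω ≤ 1 := by
    filter_upwards [hg1, hU01] with ω h1 h2
    rw [hhdef]
    by_cases hc : (W ω, U ω) ∈ C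
    · simp only [hc, if_pos, mul_one]
      have := h2.1
      linarith
    · simp [hc]
  -- ENNReal integrand on the product
  set Ψ : E × ℝ → ℝ≥0∞ := fun p => ENNReal.ofReal ((g p.1 - p.2) * (if p ∈ C then 1 else 0))
    with hΨdef
  have hΨmeas : Measurable Ψ := by
    apply Measurable.ennreal_ofReal
    exact ((hg.comp measurable_fst).sub measurable_snd).mul
      (Measurable.ite hC measurable_const measurable_const)
  have hcomp : ∀ ω, ENNReal.ofReal (h ω) = Ψ (T ω) := fun ω => rfl
  set L : ℝ≥0∞ := ∫⁻ ω, ENNReal.ofReal (h ω) ∂ℙ with hLdef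
  have hL_eq : L = ∫⁻ x, ∫⁻ u, Ψ (x, u) ∂ν ∂μ := by
    rw [hLdef]
    calc ∫⁻ ω, ENNReal.ofReal (h ω) ∂ℙ = ∫⁻ ω, Ψ (T ω) ∂ℙ := by
          exact lintegral_congr hcomp
      _ = ∫⁻ p, Ψ p ∂(Measure.map T ℙ) := (lintegral_map hΨmeas hT).symm
      _ = ∫⁻ p, Ψ p ∂(μ.prod ν) := by rw [hmapT]
      _ = ∫⁻ x, ∫⁻ u, Ψ (x, u) ∂ν ∂μ := lintegral_prod _ hΨmeas.aemeasurable
  -- sections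
  set q : E → ℝ≥0∞ := fun x => ν {u | (x, u) ∈ C} with hqdef
  have hqmeas : Measurable q := measurable_measure_prodMk_left hC
  -- transfer a.e. facts to μ
  have hae1 : ∀ᵐ x ∂μ, g x ≤ 1 := by
    rw [hμdef]
    rw [ae_map_iff hW.aemeasurable]
    · exact hg1
    · exact measurableSet_le hg measurable_const
  have hbadnull : (μ.prod ν) {p | p ∈ C ∧ g p.1 < p.2} = 0 := by
    rw [← hmapT, Measure.map_apply hT]
    · have hsub : T ⁻¹' {p | p ∈ C ∧ g p.1 < p.2}
          ⊆ {ω | ¬((W ω, U ω) ∈ C → U ω ≤ g (W ω))} := by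
        intro ω hω
        simp only [Set.mem_setOf_eq] at hω ⊢
        intro hcontra
        exact absurd (hcontra hω.1) (not_le.mpr hω.2)
      refine measure_mono_null hsub ?_
      have := hAle
      rw [MeasureTheory.ae_iff] at this
      exact this
    · exact hC.inter (measurableSet_lt (hg.comp measurable_fst) measurable_snd)
  have hae2 : ∀ᵐ x ∂μ, ν {u | (x, u) ∈ C ∧ g x < u} = 0 := by
    have := (Measure.measure_prod_null
      (hC.inter (measurableSet_lt (hg.comp measurable_fst) measurable_snd))).mp hbadnull
    filter_upwards [this] with x hx
    exact hx
  -- per-section lower bound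
  have hinner : ∀ᵐ x ∂μ, (q x) ^ 2 / 2 ≤ ∫⁻ u, Ψ (x, u) ∂ν := by
    filter_upwards [hae1, hae2] with x hx1 hx2
    have hBx : MeasurableSet {u : ℝ | (x, u) ∈ C} := measurable_prodMk_left hC
    have hBs : ∀ᵐ u ∂ν, u ∈ {u : ℝ | (x, u) ∈ C} → u ≤ g x := by
      have : ∀ᵐ u ∂ν, u ∉ {u : ℝ | (x, u) ∈ C ∧ g x < u} :=
        measure_eq_zero_iff_ae_notMem.mp hx2
      filter_upwards [this] with u hu hmem
      by_contra hcon
      exact hu ⟨hmem, not_le.mp hcon⟩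
    have := my_bathtub (g x) hx1 _ hBx hBs
    refine le_trans this ?_
    rw [← lintegral_indicator hBx]
    apply lintegral_mono
    intro u
    by_cases hc : (x, u) ∈ C
    · rw [Set.indicator_of_mem (show u ∈ {u | (x, u) ∈ C} from hc)]
      simp [hΨdef, hc]
    · rw [Set.indicator_of_notMem (show u ∉ {u | (x, u) ∈ C} from hc)]
      simp [hΨdef, hc]
  -- assemble in ℝ≥0∞
  have hPA : ℙ {ω | (W ω, U ω) ∈ C} = ∫⁻ x, q x ∂μ := by
    have : ℙ {ω | (W ω, U ω) ∈ C} = (Measure.map T ℙ) C := by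
      rw [Measure.map_apply hT hC]; rfl
    rw [this, hmapT, Measure.prod_apply hC]
    rfl
  have hmain : (ℙ {ω | (W ω, U ω) ∈ C}) ^ 2 / 2 ≤ L := by
    calc (ℙ {ω | (W ω, U ω) ∈ C}) ^ 2 / 2 = (∫⁻ x, q x ∂μ) ^ 2 / 2 := by rw [hPA]
      _ ≤ (∫⁻ x, (q x) ^ 2 ∂μ) / 2 := by
          exact ENNReal.div_le_div_right (my_lintegral_sq μ q hqmeas.aemeasurable) 2
      _ = ∫⁻ x, (q x) ^ 2 / 2 ∂μ := by
          simp_rw [div_eq_mul_inv]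
          rw [lintegral_mul_const'' _ (hqmeas.pow_const 2).aemeasurable]
      _ ≤ ∫⁻ x, ∫⁻ u, Ψ (x, u) ∂ν ∂μ := lintegral_mono_ae hinner
      _ = L := hL_eq.symm
  -- back to the real integral
  have hL_top : L ≠ ⊤ := by
    have : L ≤ 1 := by
      rw [hLdef]
      calc ∫⁻ ω, ENNReal.ofReal (h ω) ∂ℙ ≤ ∫⁻ _, 1 ∂ℙ := by
            apply lintegral_mono_ae
            filter_upwards [h_le] with ω hω
            exact ENNReal.ofReal_le_one.mpr hω
        _ = 1 := by simp
    exact (lt_of_le_of_lt this ENNReal.one_lt_top).ne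
  have hint_eq : ∫ ω, h ω ∂ℙ = L.toReal := by
    rw [hLdef, integral_eq_lintegral_of_nonneg_ae h_nn hmeas_h.aestronglyMeasurable]
  show _ ≤ ∫ ω, h ω ∂ℙ
  rw [hint_eq]
  have := ENNReal.toReal_mono hL_top hmain
  refine le_trans (le_of_eq ?_) this
  rw [ENNReal.toReal_div, ENNReal.toReal_pow]
  norm_num

open scoped Classical in
noncomputable def myG {n : ℕ} (S : Fin n → Set (Fin n → ℝ)) : ℕ → (Fin n → ℝ) → ℝ
  | 0, _ => 1
  | (k+1), x =>
    if h : k < n then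
      (if (fun j : Fin n => if j ≤ ⟨k, h⟩ then x j else 0) ∈ S ⟨k, h⟩ then x ⟨k, h⟩
       else myG S k x)
    else myG S k x

lemma myG_congr {n : ℕ} (S : Fin n → Set (Fin n → ℝ)) :
    ∀ (k : ℕ) (x y : Fin n → ℝ), (∀ j : Fin n, (j : ℕ) < k → x j = y j) →
      myG S k x = myG S k y := by
  intro k
  induction k with
  | zero => intro x y _; rfl
  | succ k ih =>
    intro x y hxy
    by_cases h : k < n
    · have hvec : (fun j : Fin n => if j ≤ (⟨k, h⟩ : Fin n) then x j else 0)
          = (fun j : Fin n => if j ≤ (⟨k, h⟩ : Fin n) then y j else 0) := by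
        funext j
        by_cases hj : j ≤ (⟨k, h⟩ : Fin n)
        · simp only [hj, if_pos]
          exact hxy j (Nat.lt_succ_of_le hj)
        · simp [hj]
      have hx : x ⟨k, h⟩ = y ⟨k, h⟩ := hxy ⟨k, h⟩ (Nat.lt_succ_self k)
      have hrec := ih x y (fun j hj => hxy j (Nat.lt_succ_of_lt hj))
      simp only [myG, dif_pos h, hvec, hx, hrec]
    · simp only [myG, dif_neg h]
      exact ih x y (fun j hj => hxy j (Nat.lt_succ_of_lt hj))

lemma myG_measurable {n : ℕ} (S : Fin n → Set (Fin n → ℝ))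
    (hS : ∀ i, MeasurableSet (S i)) : ∀ k, Measurable (myG S k) := by
  intro k
  induction k with
  | zero => exact measurable_const
  | succ k ih =>
    by_cases h : k < n
    · simp only [myG, dif_pos h]
      have htrunc : Measurable (fun (x : Fin n → ℝ) (j : Fin n) =>
          if j ≤ (⟨k, h⟩ : Fin n) then x j else 0) := by
        apply measurable_pi_lambda
        intro j
        by_cases hj : j ≤ (⟨k, h⟩ : Fin n)
        · simp only [hj, if_pos]; exact measurable_pi_apply j
        · simp only [hj, if_neg, if_false]; exact measurable_const
      exact Measurable.ite (htrunc (hS ⟨k, h⟩)) (measurable_pi_apply _) ih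
    · simp only [myG, dif_neg h]; exact ih

/-- Online monotone subsequence selection: for i.i.d. `U[0,1]` observations,
the expected number of selections made by any (in particular the optimal)
online policy selecting a strictly decreasing subsequence satisfies
`E[Ṽ_n] ≤ √(2n)` for all `n ≥ 1`. -/
theorem online_monotone_subsequence_bound
    {Ω : Type*} [MeasureSpace Ω] [IsProbabilityMeasure (ℙ : Measure Ω)]
    (n : ℕ) (hn : 1 ≤ n)
    (X : Fin n → Ω → ℝ) (hXmeas : ∀ k, Measurable (X k))
    (hiid : iIndepFun X ℙ)
    (hlaw : ∀ k, Measure.map (X k) ℙ = volume.restrict (Icc (0:ℝ) 1))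
    -- the online selection policy: `D i ω` is the decision to select `X i`,
    -- measurable with respect to the observations up to time `i`
    (D : Fin n → Ω → Bool)
    (hadapt : ∀ i : Fin n, @Measurable Ω Bool
      (MeasurableSpace.comap (fun ω => fun j : Fin n =>
        if j ≤ i then X j ω else 0) inferInstance) _ (D i))
    (hmono : ∀ ω, ∀ i j : Fin n, i < j →
      D i ω = true → D j ω = true → X j ω < X i ω)
    (V : Ω → ℕ)
    (hV : ∀ ω, V ω = (Finset.univ.filter (fun i => D i ω = true)).card) :
    ∫ ω, (V ω : ℝ) ≤ Real.sqrt (2 * n) := by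
  -- extract the measurable decision sets
  have hSex : ∀ i : Fin n, ∃ s : Set (Fin n → ℝ), MeasurableSet s ∧
      (fun ω => fun j : Fin n => if j ≤ i then X j ω else 0) ⁻¹' s = D i ⁻¹' {true} := by
    intro i
    have h := hadapt i (MeasurableSet.singleton true)
    rwa [MeasurableSpace.measurableSet_comap] at h
  choose S hSmeas hSpre using hSex
  -- the full observation vector
  set XX : Ω → (Fin n → ℝ) := fun ω j => X j ω with hXXdef
  have hXXmeas : Measurable XX := measurable_pi_lambda _ (fun j => hXmeas j)
  -- characterization of decisions
  have hDchar : ∀ (i : Fin n) (ω : Ω), D i ω = true ↔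
      (fun j : Fin n => if j ≤ i then X j ω else 0) ∈ S i := by
    intro i ω
    have := Set.ext_iff.mp (hSpre i) ω
    simp only [Set.mem_preimage, Set.mem_singleton_iff] at this
    exact this.symm
  -- the running front
  set G : Ω → ℕ → ℝ := fun ω k => myG S k (XX ω) with hGdef
  have hGmeas : ∀ k, Measurable (fun ω => G ω k) :=
    fun k => (myG_measurable S hSmeas k).comp hXXmeas
  have hGrec : ∀ (ω : Ω) (k : ℕ) (h : k < n),
      G ω (k + 1) = if D ⟨k, h⟩ ω = true then X ⟨k, h⟩ ω else G ω k := by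
    intro ω k h
    have hcond : ((fun j : Fin n => if j ≤ (⟨k, h⟩ : Fin n) then XX ω j else 0) ∈ S ⟨k, h⟩)
        ↔ D ⟨k, h⟩ ω = true := (hDchar ⟨k, h⟩ ω).symm
    by_cases hd : D ⟨k, h⟩ ω = true
    · simp only [hGdef, myG, dif_pos h, hcond.mpr hd, (hDchar ⟨k, h⟩ ω).mp hd, if_pos, hd, hXXdef]
    · have : ¬ ((fun j : Fin n => if j ≤ (⟨k, h⟩ : Fin n) then XX ω j else 0) ∈ S ⟨k, h⟩) :=
        fun hc => hd (hcond.mp hc)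
      simp only [hGdef, myG, dif_pos h, if_neg this, if_neg hd, hXXdef,
        show ¬ ((fun j : Fin n => if j ≤ (⟨k, h⟩ : Fin n) then X j ω else 0) ∈ S ⟨k, h⟩) from
          fun hc => hd ((hDchar ⟨k, h⟩ ω).mpr hc), if_false]
  have hG0 : ∀ ω, G ω 0 = 1 := fun ω => rfl
  -- invariant
  have hinv : ∀ (ω : Ω) (k : ℕ), G ω k = 1 ∨
      ∃ j : Fin n, (j : ℕ) < k ∧ D j ω = true ∧ G ω k = X j ω := by
    intro ω k
    induction k with
    | zero => exact Or.inl (hG0 ω)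
    | succ k ih =>
      by_cases h : k < n
      · rw [hGrec ω k h]
        by_cases hd : D ⟨k, h⟩ ω = true
        · exact Or.inr ⟨⟨k, h⟩, Nat.lt_succ_self k, hd, by rw [if_pos hd]⟩
        · rw [if_neg hd]
          rcases ih with h1 | ⟨j, hj1, hj2, hj3⟩
          · exact Or.inl h1
          · exact Or.inr ⟨j, Nat.lt_succ_of_lt hj1, hj2, hj3⟩
      · have : G ω (k+1) = G ω k := by simp only [hGdef, myG, dif_neg h]
        rw [this]
        rcases ih with h1 | ⟨j, hj1, hj2, hj3⟩
        · exact Or.inl h1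
        · exact Or.inr ⟨j, Nat.lt_succ_of_lt hj1, hj2, hj3⟩
  -- the a.e. good set
  have hX01 : ∀ᵐ ω ∂ℙ, ∀ j : Fin n, X j ω ∈ Icc (0:ℝ) 1 := by
    rw [ae_all_iff]
    intro j
    have : ℙ (X j ⁻¹' (Icc (0:ℝ) 1)ᶜ) = 0 := by
      rw [← Measure.map_apply (hXmeas j) (measurableSet_Icc.compl), hlaw j,
        Measure.restrict_apply measurableSet_Icc.compl]
      simp
    filter_upwards [measure_eq_zero_iff_ae_notMem.mp this] with ω hω
    simpa using hω
  -- bounds and key inequality, pointwise on the good set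
  have hGbound : ∀ ω, (∀ j : Fin n, X j ω ∈ Icc (0:ℝ) 1) →
      ∀ k, 0 ≤ G ω k ∧ G ω k ≤ 1 := by
    intro ω hω k
    rcases hinv ω k with h1 | ⟨j, _, _, h3⟩
    · rw [h1]; exact ⟨zero_le_one, le_refl 1⟩
    · rw [h3]; exact ⟨(hω j).1, (hω j).2⟩
  have hkey : ∀ ω, (∀ j : Fin n, X j ω ∈ Icc (0:ℝ) 1) →
      ∀ i : Fin n, D i ω = true → X i ω ≤ G ω i := by
    intro ω hω i hd
    rcases hinv ω i with h1 | ⟨j, hj1, hj2, hj3⟩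
    · rw [h1]; exact (hω i).2
    · rw [hj3]
      exact le_of_lt (hmono ω j i hj1 hj2 hd)
  have htruncmeas : ∀ i : Fin n,
      Measurable (fun ω => fun j : Fin n => if j ≤ i then X j ω else 0) := by
    intro i
    apply measurable_pi_lambda
    intro j
    by_cases hj : j ≤ i
    · simp only [hj, if_pos]; exact hXmeas j
    · simp only [hj, if_neg, if_false]; exact measurable_const
  have hAmeas : ∀ i : Fin n, MeasurableSet (D i ⁻¹' {true}) := by
    intro i
    rw [← hSpre i]
    exact (htruncmeas i) (hSmeas i)
  -- the per-index term
  set term : Fin n → Ω → ℝ :=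
    fun i ω => (G ω i - X i ω) * (if D i ω = true then 1 else 0) with htermdef
  have hterm_meas : ∀ i, Measurable (term i) := by
    intro i
    apply Measurable.mul
    · exact (hGmeas i).sub (hXmeas i)
    · exact Measurable.ite (hAmeas i) measurable_const measurable_const
  -- telescoping identity
  have htel : ∀ ω, ∑ i : Fin n, term i ω = 1 - G ω n := by
    intro ω
    have hfun : ∀ i : Fin n, term i ω = G ω i - G ω (i + 1) := by
      intro i
      have hrec := hGrec ω i i.isLt
      rw [show (⟨(i:ℕ), i.isLt⟩ : Fin n) = i from Fin.eta i i.isLt] at hrec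
      show (G ω i - X i ω) * (if D i ω = true then 1 else 0) = G ω i - G ω (i + 1)
      by_cases hd : D i ω = true
      · rw [if_pos hd, mul_one, hrec, if_pos hd]
      · rw [if_neg hd, mul_zero, hrec, if_neg hd, sub_self]
    calc ∑ i : Fin n, term i ω = ∑ i : Fin n, (G ω i - G ω (i + 1)) :=
          Finset.sum_congr rfl (fun i _ => hfun i)
      _ = ∑ k ∈ Finset.range n, (G ω k - G ω (k + 1)) :=
          Fin.sum_univ_eq_sum_range (fun k => G ω k - G ω (k+1)) n
      _ = G ω 0 - G ω n := Finset.sum_range_sub' (fun k => G ω k) n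
      _ = 1 - G ω n := by rw [hG0]
  -- integrability of each term
  have hterm_int : ∀ i, Integrable (term i) ℙ := by
    intro i
    apply Integrable.mono' (integrable_const (2:ℝ)) (hterm_meas i).aestronglyMeasurable
    filter_upwards [hX01] with ω hω
    show ‖(G ω i - X i ω) * (if D i ω = true then 1 else 0)‖ ≤ 2
    have h1 := hGbound ω hω i
    have h2 := hω i
    simp only [Real.norm_eq_abs]
    by_cases hd : D i ω = true
    · rw [if_pos hd, mul_one, abs_le]
      rw [Set.mem_Icc] at h2
      exact ⟨by linarith [h1.1, h1.2, h2.1, h2.2], by linarith [h1.1, h1.2, h2.1, h2.2]⟩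
    · simp [hd]
  -- total expected consumption is at most 1
  have hsum_le : ∑ i : Fin n, ∫ ω, term i ω ∂ℙ ≤ 1 := by
    rw [← integral_finset_sum _ (fun i _ => hterm_int i)]
    have hint : Integrable (fun ω => ∑ i : Fin n, term i ω) ℙ :=
      integrable_finset_sum _ (fun i _ => hterm_int i)
    calc ∫ ω, ∑ i : Fin n, term i ω ∂ℙ ≤ ∫ _, (1:ℝ) ∂ℙ := by
          apply integral_mono_ae hint (integrable_const 1)
          filter_upwards [hX01] with ω hω
          rw [htel ω]
          have := (hGbound ω hω n).1
          linarith
      _ = 1 := by simp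
  -- the key per-index inequality
  have hstep : ∀ i : Fin n,
      (ℙ (D i ⁻¹' {true})).toReal ^ 2 / 2 ≤ ∫ ω, term i ω ∂ℙ := by
    intro i
    set W : Ω → (Fin n → ℝ) := fun ω j => if (j:ℕ) < (i:ℕ) then X j ω else 0 with hWdef
    have hWmeas : Measurable W := by
      rw [hWdef]
      apply measurable_pi_lambda
      intro j
      by_cases hj : (j:ℕ) < (i:ℕ)
      · simp only [hj, if_pos]; exact hXmeas j
      · simp only [hj, if_neg, if_false]; exact measurable_const
    -- independence of the past from the present
    have hind : IndepFun W (X i) ℙ := by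
      set Sf : Finset (Fin n) := Finset.univ.filter (fun j => (j:ℕ) < (i:ℕ)) with hSf
      have hmemSf : ∀ j : Fin n, j ∈ Sf ↔ (j:ℕ) < (i:ℕ) := by
        intro j; simp [hSf]
      have hdisj : Disjoint Sf {i} := by
        rw [Finset.disjoint_singleton_right, hmemSf]
        simp
      have h0 := hiid.indepFun_finset Sf {i} hdisj hXmeas
      have hφ : Measurable (fun v : ((j : Sf) → ℝ) =>
          (fun j : Fin n => if h : j ∈ Sf then v ⟨j, h⟩ else 0)) := by
        apply measurable_pi_lambda
        intro j
        by_cases h : j ∈ Sf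
        · simp only [h, dif_pos]; exact measurable_pi_apply _
        · simp only [h, dif_neg, not_false_iff]; exact measurable_const
      have hψ : Measurable (fun v : ((j : ({i} : Finset (Fin n))) → ℝ) =>
          v ⟨i, Finset.mem_singleton_self i⟩) := measurable_pi_apply _
      have h1 := h0.comp hφ hψ
      have e1 : ((fun v : ((j : Sf) → ℝ) =>
          (fun j : Fin n => if h : j ∈ Sf then v ⟨j, h⟩ else 0)) ∘
            (fun a (j : Sf) => X j a)) = W := by
        funext ω
        funext j
        simp only [Function.comp_apply, hWdef]
        by_cases h : j ∈ Sf
        · rw [dif_pos h, if_pos ((hmemSf j).mp h)]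
        · rw [dif_neg h, if_neg (fun hc => h ((hmemSf j).mpr hc))]
      have e2 : ((fun v : ((j : ({i} : Finset (Fin n))) → ℝ) =>
          v ⟨i, Finset.mem_singleton_self i⟩) ∘ (fun a (j : ({i} : Finset (Fin n))) => X j a))
          = X i := rfl
      rw [e1, e2] at h1
      exact h1
    -- the decision set on the product space
    set C : Set ((Fin n → ℝ) × ℝ) := {p | Function.update p.1 i p.2 ∈ S i} with hCdef
    have hCmeas : MeasurableSet C := measurable_update' (hSmeas i)
    have hupd : ∀ ω, Function.update (W ω) i (X i ω)
        = (fun j : Fin n => if j ≤ i then X j ω else 0) := by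
      intro ω
      funext j
      rw [Function.update_apply]
      by_cases hji : j = i
      · subst hji; simp
      · rw [if_neg hji]
        by_cases hj : (j:ℕ) < (i:ℕ)
        · have hle : j ≤ i := le_of_lt (Fin.lt_def.mpr hj)
          simp only [hWdef, hj, if_pos, hle]
        · have hnle : ¬ j ≤ i := by
            intro hc
            exact hj (Fin.lt_def.mp (lt_of_le_of_ne hc hji))
          simp only [hWdef, hj, if_neg, not_false_iff, hnle, if_false]
    have hmem : ∀ ω, ((W ω, X i ω) ∈ C) ↔ D i ω = true := by
      intro ω
      rw [hCdef]
      simp only [Set.mem_setOf_eq]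
      rw [hupd ω]
      exact (hDchar i ω).symm
    have hgW : ∀ ω, myG S (i:ℕ) (W ω) = G ω i := by
      intro ω
      apply myG_congr
      intro j hj
      simp only [hWdef, hXXdef, hj, if_pos]
    have hAle : ∀ᵐ ω ∂ℙ, (W ω, X i ω) ∈ C → X i ω ≤ myG S (i:ℕ) (W ω) := by
      filter_upwards [hX01] with ω hω hc
      rw [hgW ω]
      exact hkey ω hω i ((hmem ω).mp hc)
    have hg1 : ∀ᵐ ω ∂ℙ, myG S (i:ℕ) (W ω) ≤ 1 := by
      filter_upwards [hX01] with ω hω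
      rw [hgW ω]
      exact (hGbound ω hω i).2
    have hfinal := my_step3 W (X i) hWmeas (hXmeas i) hind (hlaw i)
      (myG S (i:ℕ)) (myG_measurable S hSmeas (i:ℕ)) C hCmeas hAle hg1
    have hsets : {ω | (W ω, X i ω) ∈ C} = D i ⁻¹' {true} := by
      ext ω
      simp only [Set.mem_setOf_eq, Set.mem_preimage, Set.mem_singleton_iff]
      exact hmem ω
    rw [hsets] at hfinal
    refine le_trans hfinal (le_of_eq ?_)
    apply integral_congr_ae
    apply Filter.Eventually.of_forall
    intro ω
    show (myG S (i:ℕ) (W ω) - X i ω) * (if (W ω, X i ω) ∈ C then 1 else 0) = term i ω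
    rw [hgW ω]
    show (G ω i - X i ω) * _ = (G ω i - X i ω) * _
    congr 1
    by_cases hd : D i ω = true
    · rw [if_pos ((hmem ω).mpr hd), if_pos hd]
    · rw [if_neg (fun hc => hd ((hmem ω).mp hc)), if_neg hd]
  -- assemble
  set p : Fin n → ℝ := fun i => (ℙ (D i ⁻¹' {true})).toReal with hpdef
  have hp_nonneg : ∀ i, 0 ≤ p i := fun i => ENNReal.toReal_nonneg
  have hsum2 : ∑ i : Fin n, p i ^ 2 ≤ 2 := by
    have h1 : ∑ i : Fin n, p i ^ 2 / 2 ≤ ∑ i : Fin n, ∫ ω, term i ω ∂ℙ :=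
      Finset.sum_le_sum (fun i _ => hstep i)
    have h2 := h1.trans hsum_le
    rw [← Finset.sum_div] at h2
    linarith
  have hEV : ∫ ω, (V ω : ℝ) ∂ℙ = ∑ i : Fin n, p i := by
    have hVeq : ∀ ω, (V ω : ℝ) = ∑ i : Fin n, (if D i ω = true then (1:ℝ) else 0) := by
      intro ω
      rw [hV ω]
      exact Finset.natCast_card_filter _ _
    calc ∫ ω, (V ω : ℝ) ∂ℙ
        = ∫ ω, ∑ i : Fin n, (if D i ω = true then (1:ℝ) else 0) ∂ℙ :=
          integral_congr_ae (Filter.Eventually.of_forall hVeq)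
      _ = ∑ i : Fin n, ∫ ω, (if D i ω = true then (1:ℝ) else 0) ∂ℙ := by
          apply integral_finset_sum
          intro i _
          apply Integrable.mono' (integrable_const (1:ℝ))
          · exact (Measurable.ite (hAmeas i) measurable_const
              measurable_const).aestronglyMeasurable
          · filter_upwards with ω
            by_cases hd : D i ω = true <;> simp [hd]
      _ = ∑ i : Fin n, p i := by
          apply Finset.sum_congr rfl
          intro i _
          have hind_eq : (fun ω => if D i ω = true then (1:ℝ) else 0)
              = (D i ⁻¹' {true}).indicator (fun _ => (1:ℝ)) := by
            funext ω
            by_cases hd : D i ω = true <;> simp [hd, Set.indicator]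
          rw [hind_eq, integral_indicator_const _ (hAmeas i)]
          simp [hpdef]
          rfl
  rw [hEV]
  have hCS : (∑ i : Fin n, p i) ^ 2 ≤ (n : ℝ) * ∑ i : Fin n, p i ^ 2 := by
    have h := sq_sum_le_card_mul_sum_sq (s := (Finset.univ : Finset (Fin n))) (f := p)
    simpa using h
  have h2n : (∑ i : Fin n, p i) ^ 2 ≤ 2 * n := by
    calc (∑ i : Fin n, p i) ^ 2 ≤ (n : ℝ) * ∑ i : Fin n, p i ^ 2 := hCS
      _ ≤ (n : ℝ) * 2 := mul_le_mul_of_nonneg_left hsum2 (Nat.cast_nonneg n)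
      _ = 2 * n := by ring
  have hfin := Real.sqrt_le_sqrt h2n
  rwa [Real.sqrt_sq (Finset.sum_nonneg (fun i _ => hp_nonneg i))] at hfin
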